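/- For every infinite cardinal κ, there is a family F of functions from cf(κ) to κ with |F| = κ⁺ such that for any two distinct f, g ∈ F, the set {α < cf(κ) : f(α) = g(α)} has cardinality less than cf(κ). -/

import Mathlib

open Cardinal Set

/-- Key diagonalization: given at most `κ` functions, there is one almost disjoint
(in the graph sense) from all of them. -/
lemma key7 (κ : Cardinal.{u}) (hκ : Cardinal.aleph0 ≤ κ)
    (G : Set (Quotient.out κ.ord.cof → Quotient.out κ)) (hG : #G ≤ κ) :
    ∃ f : Quotient.out κ.ord.cof → Quotient.out κ,
      ∀ g ∈ G, #{α | f α = g α} < κ.ord.cof := by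
  classical
  let ν := κ.ord.cof
  have hlim : Order.IsSuccLimit κ.ord := Cardinal.isSuccLimit_ord hκ
  have hνinf : Cardinal.aleph0 ≤ ν := Ordinal.aleph0_le_cof.2 hlim
  obtain ⟨eT⟩ : Nonempty (Quotient.out ν ≃ ν.ord.ToType) :=
    Cardinal.eq.1 (by rw [Cardinal.mk_out, Cardinal.mk_toType, Cardinal.card_ord])
  obtain ⟨e⟩ : Nonempty (G ↪ κ.ord.ToType) :=
    (Cardinal.le_def _ _).1 (by rw [Cardinal.mk_toType, Cardinal.card_ord]; exact hG)
  obtain ⟨s, hs⟩ := Ordinal.exists_fundamental_sequence κ.ord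
  let σ := Ordinal.ToType.mk (o := κ.ord)
  let τ := (Ordinal.ToType.mk (o := ν.ord)).symm
  let c : ν.ord.ToType → κ.ord.ToType := fun t => σ ⟨s (τ t).1 (τ t).2, hs.lt _⟩
  have hmono : StrictMono c := by
    intro t t' h
    exact σ.lt_iff_lt.2 (hs.strict_mono _ _ (τ.lt_iff_lt.2 h))
  have hcof : ∀ x : κ.ord.ToType, ∃ t, x ≤ c t := by
    intro x
    have hx : (σ.symm x).1 < Ordinal.blsub ν.ord s := by
      rw [hs.blsub_eq]; exact (σ.symm x).2
    obtain ⟨i, hi, hix⟩ := Ordinal.lt_blsub_iff.1 hx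
    refine ⟨τ.symm ⟨i, hi⟩, ?_⟩
    have h1 : τ (τ.symm ⟨i, hi⟩) = ⟨i, hi⟩ := τ.apply_symm_apply _
    conv_lhs => rw [← σ.apply_symm_apply x]
    refine σ.le_iff_le.2 ?_
    show (σ.symm x : Ordinal) ≤ s (τ (τ.symm ⟨i, hi⟩)).1 (τ (τ.symm ⟨i, hi⟩)).2
    rw [h1]
    exact hix
  let excl : Quotient.out ν → Set (Quotient.out κ) := fun α =>
    {x | ∃ g : G, e g < c (eT α) ∧ (g : Quotient.out ν → Quotient.out κ) α = x}
  have hexcl : ∀ α, excl α ≠ Set.univ := by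
    intro α h
    have f1 : Function.Surjective (fun p : {g : G // e g < c (eT α)} =>
        (⟨(p.1 : Quotient.out ν → Quotient.out κ) α, p.1, p.2, rfl⟩ : excl α)) := by
      rintro ⟨x, g, hg, rfl⟩; exact ⟨⟨g, hg⟩, rfl⟩
    have f2 : Function.Injective (fun p : {g : G // e g < c (eT α)} =>
        (⟨e p.1, p.2⟩ : Iio (c (eT α)))) := by
      intro p q hpq
      exact Subtype.ext (e.injective (congrArg Subtype.val hpq))
    have h2 : #(excl α) < κ :=
      ((Cardinal.mk_le_of_surjective f1).trans (Cardinal.mk_le_of_injective f2)).trans_lt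
        (Cardinal.mk_Iio_ord_toType _)
    rw [h, Cardinal.mk_univ, Cardinal.mk_out] at h2
    exact lt_irrefl _ h2
  choose fch hfch using fun α => Set.nonempty_compl.2 (hexcl α)
  refine ⟨fch, ?_⟩
  intro g hg
  obtain ⟨t, ht⟩ := hcof (e ⟨g, hg⟩)
  have hsub : {α | fch α = g α} ⊆ eT ⁻¹' (Iic t) := by
    intro α hα
    by_contra hmem
    have hlt : t < eT α := lt_of_not_ge hmem
    have hin : g α ∈ excl α := ⟨⟨g, hg⟩, ht.trans_lt (hmono hlt), rfl⟩
    exact (hfch α) (hα ▸ hin)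
  calc #{α | fch α = g α} ≤ #(eT ⁻¹' (Iic t)) := Cardinal.mk_le_mk_of_subset hsub
    _ ≤ #(Iic t) := Cardinal.mk_preimage_of_injective _ _ eT.injective
    _ = #(insert t (Iio t) : Set ν.ord.ToType) := by rw [Set.Iio_insert]
    _ ≤ #(Iio t) + 1 := Cardinal.mk_insert_le
    _ < ν := Cardinal.add_lt_of_lt hνinf (Cardinal.mk_Iio_ord_toType t)
        (Cardinal.one_lt_aleph0.trans_le hνinf)

/-- For every infinite cardinal `κ` there is a family of `κ⁺` many functions from `cf(κ)`
to `κ` any two of which agree on fewer than `cf(κ)` coordinates. -/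
theorem statement7 (κ : Cardinal) (hκ : Cardinal.aleph0 ≤ κ) :
    ∃ F : Set (Quotient.out κ.ord.cof → Quotient.out κ),
      #F = Order.succ κ ∧
      ∀ f ∈ F, ∀ g ∈ F, f ≠ g → #{α | f α = g α} < κ.ord.cof := by
  classical
  let ν := κ.ord.cof
  let W := (Order.succ κ).ord.ToType
  have wf : WellFounded ((· < ·) : W → W → Prop) := IsWellFounded.wf
  have hbound : ∀ (w : W) (ih : ∀ v, v < w → (Quotient.out ν → Quotient.out κ)),
      #{g | ∃ v, ∃ h : v < w, ih v h = g} ≤ κ := by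
    intro w ih
    have hsurj : Function.Surjective (fun v : Iio w =>
        (⟨ih v v.2, v, v.2, rfl⟩ : {g | ∃ v, ∃ h : v < w, ih v h = g})) := by
      rintro ⟨g, v, hv, rfl⟩; exact ⟨⟨v, hv⟩, rfl⟩
    exact Order.lt_succ_iff.1
      ((Cardinal.mk_le_of_surjective hsurj).trans_lt (Cardinal.mk_Iio_ord_toType w))
  let Φ : W → (Quotient.out ν → Quotient.out κ) :=
    wf.fix (fun w ih => (key7 κ hκ _ (hbound w ih)).choose)
  have hΦ : ∀ w v, v < w → #{α | Φ w α = Φ v α} < ν := by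
    intro w v hv
    have hfix : Φ w = (key7 κ hκ {g | ∃ u, ∃ h : u < w, Φ u = g}
        (hbound w (fun u _ => Φ u))).choose := wf.fix_eq _ w
    rw [hfix]
    exact (key7 κ hκ {g | ∃ u, ∃ h : u < w, Φ u = g}
      (hbound w (fun u _ => Φ u))).choose_spec (Φ v) ⟨v, hv, rfl⟩
  have hinj : Function.Injective Φ := by
    intro v w h
    by_contra hne
    have habs : ∀ u₁ u₂, u₂ < u₁ → Φ u₁ = Φ u₂ → False := by
      intro u₁ u₂ hlt heq
      have h1 := hΦ u₁ u₂ hlt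
      rw [heq] at h1
      simp only [Set.setOf_true, Cardinal.mk_univ, Cardinal.mk_out] at h1
      exact lt_irrefl _ h1
    rcases lt_or_gt_of_ne hne with hlt | hlt
    · exact habs w v hlt h.symm
    · exact habs v w hlt h
  refine ⟨Set.range Φ, ?_, ?_⟩
  · rw [Cardinal.mk_range_eq _ hinj, Cardinal.mk_toType, Cardinal.card_ord]
  · rintro f ⟨w, rfl⟩ g ⟨v, rfl⟩ hfg
    rcases lt_trichotomy v w with h | h | h
    · exact hΦ w v h
    · exact absurd (by rw [h]) hfg
    · have hset : {α | Φ w α = Φ v α} = {α | Φ v α = Φ w α} := by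
        ext α; exact eq_comm
      rw [hset]
      exact hΦ v w h
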